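/- Let {E_a} be Kraus operators of a CPTP map E on H_S ⊗ H_B and C ⊆ H_S a subspace with projector P_C. If P_C E_{a;kℓ}† E_{b;mn} P_C = Λ_{akℓ,bmn} P_C for all indices, with Λ a Hermitian matrix in the triple indices, then there exists a CPTP map R_S on H_S such that R := R_S ⊗ id_B satisfies Tr_B{(R∘E)(ρ)} = Tr_B{ρ} for every state ρ supported on C ⊗ H_B. In particular, R_S can be taken with Kraus operators {P_C F_α†/√λ_α} where the F_α arise from diagonalizing Λ. -/

import Mathlib

open Matrix
open scoped BigOperators Kronecker ComplexOrder

namespace OSQEC5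

/-- Partial trace over the bath factor. -/
noncomputable def trB {dS dB : ℕ}
    (M : Matrix (Fin dS × Fin dB) (Fin dS × Fin dB) ℂ) :
    Matrix (Fin dS) (Fin dS) ℂ :=
  Matrix.of fun i j => ∑ k : Fin dB, M (i, k) (j, k)

/-- Partial matrix element `⟨k|M|ℓ⟩`, a system operator. -/
def pmel {dS dB : ℕ} (M : Matrix (Fin dS × Fin dB) (Fin dS × Fin dB) ℂ)
    (k ℓ : Fin dB) : Matrix (Fin dS) (Fin dS) ℂ :=
  Matrix.of fun i j => M (i, k) (j, ℓ)

variable {dS dB : ℕ}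

lemma pmel_sum {κ : Type*} (s : Finset κ)
    (f : κ → Matrix (Fin dS × Fin dB) (Fin dS × Fin dB) ℂ) (k l : Fin dB) :
    pmel (∑ a ∈ s, f a) k l = ∑ a ∈ s, pmel (f a) k l := by
  ext i j; simp [pmel, Matrix.sum_apply]

lemma trB_eq (M : Matrix (Fin dS × Fin dB) (Fin dS × Fin dB) ℂ) :
    trB M = ∑ m : Fin dB, pmel M m m := by
  ext i j; simp [trB, pmel, Matrix.sum_apply]

lemma pmel_one (k l : Fin dB) :
    pmel (1 : Matrix (Fin dS × Fin dB) (Fin dS × Fin dB) ℂ) k l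
      = if k = l then 1 else 0 := by
  ext i j
  by_cases h : k = l <;>
    simp [pmel, Matrix.one_apply, Prod.ext_iff, h, and_comm]

lemma pmel_conjTranspose_mul
    (M N : Matrix (Fin dS × Fin dB) (Fin dS × Fin dB) ℂ) (k l : Fin dB) :
    pmel (Mᴴ * N) k l = ∑ n : Fin dB, (pmel M n k)ᴴ * pmel N n l := by
  ext i j
  simp only [pmel, Matrix.sum_apply, Matrix.mul_apply, Matrix.conjTranspose_apply,
    Matrix.of_apply, Fintype.sum_prod_type]
  rw [Finset.sum_comm]

lemma kron_conjTranspose (A : Matrix (Fin dS) (Fin dS) ℂ)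
    (B : Matrix (Fin dB) (Fin dB) ℂ) : (A ⊗ₖ B)ᴴ = Aᴴ ⊗ₖ Bᴴ := by
  ext ⟨i, k⟩ ⟨j, l⟩
  simp [Matrix.conjTranspose_apply, Matrix.kroneckerMap_apply]

lemma pmel_kron_mul (X : Matrix (Fin dS) (Fin dS) ℂ)
    (w : Matrix (Fin dB) (Fin dB) ℂ)
    (M : Matrix (Fin dS × Fin dB) (Fin dS × Fin dB) ℂ) (k l : Fin dB) :
    pmel ((X ⊗ₖ w) * M) k l = ∑ m : Fin dB, w k m • (X * pmel M m l) := by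
  ext i j
  simp only [pmel, Matrix.sum_apply, Matrix.mul_apply, Matrix.kroneckerMap_apply,
    Matrix.of_apply, Fintype.sum_prod_type, Matrix.smul_apply, smul_eq_mul,
    Finset.mul_sum]
  rw [Finset.sum_comm]
  exact Finset.sum_congr rfl fun m _ => Finset.sum_congr rfl fun s _ => by ring

lemma pmel_mul_kron (M : Matrix (Fin dS × Fin dB) (Fin dS × Fin dB) ℂ)
    (X : Matrix (Fin dS) (Fin dS) ℂ) (w : Matrix (Fin dB) (Fin dB) ℂ)
    (k l : Fin dB) :
    pmel (M * (X ⊗ₖ w)) k l = ∑ m : Fin dB, w m l • (pmel M k m * X) := by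
  ext i j
  simp only [pmel, Matrix.sum_apply, Matrix.mul_apply, Matrix.kroneckerMap_apply,
    Matrix.of_apply, Fintype.sum_prod_type, Matrix.smul_apply, smul_eq_mul,
    Finset.mul_sum]
  rw [Finset.sum_comm]
  exact Finset.sum_congr rfl fun m _ => Finset.sum_congr rfl fun s _ => by ring

lemma pmel_kron_one_mul (X : Matrix (Fin dS) (Fin dS) ℂ)
    (M : Matrix (Fin dS × Fin dB) (Fin dS × Fin dB) ℂ) (k l : Fin dB) :
    pmel ((X ⊗ₖ (1 : Matrix (Fin dB) (Fin dB) ℂ)) * M) k l = X * pmel M k l := by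
  rw [pmel_kron_mul]
  simp [Matrix.one_apply]

lemma pmel_mul_kron_one (M : Matrix (Fin dS × Fin dB) (Fin dS × Fin dB) ℂ)
    (X : Matrix (Fin dS) (Fin dS) ℂ) (k l : Fin dB) :
    pmel (M * (X ⊗ₖ (1 : Matrix (Fin dB) (Fin dB) ℂ))) k l = pmel M k l * X := by
  rw [pmel_mul_kron]
  simp [Matrix.one_apply]

lemma pmel_ext {M N : Matrix (Fin dS × Fin dB) (Fin dS × Fin dB) ℂ}
    (h : ∀ k l, pmel M k l = pmel N k l) : M = N := by
  ext ⟨i, k⟩ ⟨j, l⟩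
  exact congrFun (congrFun (congrArg (fun (m : Matrix (Fin dS) (Fin dS) ℂ) => (m : Fin dS → Fin dS → ℂ)) (h k l)) i) j


lemma pmel_kron (X : Matrix (Fin dS) (Fin dS) ℂ)
    (w : Matrix (Fin dB) (Fin dB) ℂ) (k l : Fin dB) :
    pmel (X ⊗ₖ w) k l = w k l • X := by
  ext i j
  simp [pmel, Matrix.kroneckerMap_apply, mul_comm]

lemma pmel_zero (k l : Fin dB) :
    pmel (0 : Matrix (Fin dS × Fin dB) (Fin dS × Fin dB) ℂ) k l = 0 := by
  ext i j; simp [pmel]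

lemma trB_sum {κ : Type*} (s : Finset κ)
    (f : κ → Matrix (Fin dS × Fin dB) (Fin dS × Fin dB) ℂ) :
    trB (∑ x ∈ s, f x) = ∑ x ∈ s, trB (f x) := by
  ext i j
  simp only [trB, Matrix.sum_apply, Matrix.of_apply]
  exact Finset.sum_comm

/-- Compression of `M` by a bath-side weight matrix `V`. -/
noncomputable def bop (V : Matrix (Fin dB) (Fin dB) ℂ)
    (M : Matrix (Fin dS × Fin dB) (Fin dS × Fin dB) ℂ) :
    Matrix (Fin dS) (Fin dS) ℂ :=
  ∑ m : Fin dB, ∑ m' : Fin dB, V m' m • pmel M m m'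

lemma bop_one (M : Matrix (Fin dS × Fin dB) (Fin dS × Fin dB) ℂ) :
    bop 1 M = trB M := by
  rw [trB_eq, bop]
  refine Finset.sum_congr rfl fun m _ => ?_
  rw [Finset.sum_eq_single m] <;> simp +contextual [Matrix.one_apply, eq_comm]

lemma bop_sum {κ : Type*} (s : Finset κ) (V : κ → Matrix (Fin dB) (Fin dB) ℂ)
    (M : Matrix (Fin dS × Fin dB) (Fin dS × Fin dB) ℂ) :
    bop (∑ x ∈ s, V x) M = ∑ x ∈ s, bop (V x) M := by
  unfold bop
  calc ∑ m : Fin dB, ∑ m' : Fin dB, (∑ x ∈ s, V x) m' m • pmel M m m'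
      = ∑ m : Fin dB, ∑ m' : Fin dB, ∑ x ∈ s, V x m' m • pmel M m m' := by
        refine Finset.sum_congr rfl fun m _ => Finset.sum_congr rfl fun m' _ => ?_
        rw [Matrix.sum_apply, Finset.sum_smul]
    _ = ∑ m : Fin dB, ∑ x ∈ s, ∑ m' : Fin dB, V x m' m • pmel M m m' :=
        Finset.sum_congr rfl fun m _ => Finset.sum_comm
    _ = ∑ x ∈ s, ∑ m : Fin dB, ∑ m' : Fin dB, V x m' m • pmel M m m' :=
        Finset.sum_comm

lemma trB_kron_conj (A : Matrix (Fin dS) (Fin dS) ℂ)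
    (w : Matrix (Fin dB) (Fin dB) ℂ)
    (M : Matrix (Fin dS × Fin dB) (Fin dS × Fin dB) ℂ) :
    trB ((A ⊗ₖ w) * M * (A ⊗ₖ w)ᴴ) = A * bop (wᴴ * w) M * Aᴴ := by
  rw [kron_conjTranspose, trB_eq]
  have h1 : ∀ n : Fin dB, pmel ((A ⊗ₖ w) * M * (Aᴴ ⊗ₖ wᴴ)) n n
      = ∑ m' : Fin dB, ∑ m : Fin dB,
          (star (w n m') * w n m) • (A * pmel M m m' * Aᴴ) := by
    intro n
    rw [pmel_mul_kron]
    refine Finset.sum_congr rfl fun m' _ => ?_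
    rw [pmel_kron_mul, Matrix.conjTranspose_apply, Finset.sum_mul, Finset.smul_sum]
    refine Finset.sum_congr rfl fun m _ => ?_
    rw [Matrix.smul_mul, smul_smul]
  rw [Finset.sum_congr rfl fun n _ => h1 n]
  have h2 : A * bop (wᴴ * w) M * Aᴴ
      = ∑ m : Fin dB, ∑ m' : Fin dB, ∑ n : Fin dB,
          (star (w n m') * w n m) • (A * pmel M m m' * Aᴴ) := by
    rw [bop, Finset.mul_sum, Finset.sum_mul]
    refine Finset.sum_congr rfl fun m _ => ?_
    rw [Finset.mul_sum, Finset.sum_mul]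
    refine Finset.sum_congr rfl fun m' _ => ?_
    rw [Matrix.mul_apply, Finset.sum_smul, Finset.mul_sum, Finset.sum_mul]
    refine Finset.sum_congr rfl fun n _ => ?_
    rw [Matrix.conjTranspose_apply, Matrix.mul_smul, Matrix.smul_mul]
  rw [h2]
  calc ∑ n : Fin dB, ∑ m' : Fin dB, ∑ m : Fin dB,
          (star (w n m') * w n m) • (A * pmel M m m' * Aᴴ)
      = ∑ n : Fin dB, ∑ m : Fin dB, ∑ m' : Fin dB,
          (star (w n m') * w n m) • (A * pmel M m m' * Aᴴ) :=
        Finset.sum_congr rfl fun n _ => Finset.sum_comm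
    _ = ∑ m : Fin dB, ∑ n : Fin dB, ∑ m' : Fin dB,
          (star (w n m') * w n m) • (A * pmel M m m' * Aᴴ) := Finset.sum_comm
    _ = ∑ m : Fin dB, ∑ m' : Fin dB, ∑ n : Fin dB,
          (star (w n m') * w n m) • (A * pmel M m m' * Aᴴ) :=
        Finset.sum_congr rfl fun m _ => Finset.sum_comm


/-- trace of `Bᴴ * B` is a nonnegative real, zero only for `B = 0`. -/
lemma trace_conj_real {m n : Type*} [Fintype m] [Fintype n]
    (B : Matrix m n ℂ) :
    ∃ r : ℝ, 0 ≤ r ∧ (Bᴴ * B).trace = (r : ℂ) ∧ (r = 0 → B = 0) := by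
  refine ⟨∑ j : n, ∑ i : m, Complex.normSq (B i j), ?_, ?_, ?_⟩
  · exact Finset.sum_nonneg fun _ _ => Finset.sum_nonneg fun _ _ => Complex.normSq_nonneg _
  · rw [Matrix.trace]
    push_cast
    refine Finset.sum_congr rfl fun j _ => ?_
    simp [Matrix.mul_apply, Matrix.conjTranspose_apply, Matrix.diag,
      mul_comm, Complex.mul_conj]
  · intro h
    have h2 : ∀ j : n, ∀ i : m, Complex.normSq (B i j) = 0 := by
      intro j i
      have := (Finset.sum_eq_zero_iff_of_nonneg
        (fun j _ => Finset.sum_nonneg fun _ _ => Complex.normSq_nonneg _)).mp h j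
        (Finset.mem_univ j)
      exact (Finset.sum_eq_zero_iff_of_nonneg
        (fun i _ => Complex.normSq_nonneg _)).mp this i (Finset.mem_univ i)
    ext i j
    simpa [Complex.normSq_eq_zero] using h2 j i


/-- 'If' direction of the OSQEC conditions: if
`P_C E_{a;kℓ}† E_{b;mn} P_C = Λ_{akℓ,bmn} P_C` for a Hermitian `Λ`, then there is a
CPTP system-only map `R_S` such that `R = R_S ⊗ id_B` recovers the noise `E` on
every state supported on `C ⊗ H_B`. -/
theorem stmt_5 {dS dB : ℕ} {ι : Type*} [Fintype ι]
    (PC : Matrix (Fin dS) (Fin dS) ℂ)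
    (hPCH : PC.IsHermitian) (hPCproj : PC * PC = PC)
    (E : ι → Matrix (Fin dS × Fin dB) (Fin dS × Fin dB) ℂ)
    (hTP : ∑ a, (E a)ᴴ * E a = 1)
    (Λ : (ι × Fin dB × Fin dB) → (ι × Fin dB × Fin dB) → ℂ)
    (hΛH : ∀ p q, Λ p q = star (Λ q p))
    (hKL : ∀ a b k ℓ m n, PC * (pmel (E a) k ℓ)ᴴ * pmel (E b) m n * PC
        = Λ (a, k, ℓ) (b, m, n) • PC) :
    ∃ (κ : Type) (_ : Fintype κ) (R : κ → Matrix (Fin dS) (Fin dS) ℂ),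
      (∑ c, (R c)ᴴ * R c = 1) ∧
      ∀ ρ : Matrix (Fin dS × Fin dB) (Fin dS × Fin dB) ℂ,
        ρ.PosSemidef → ρ.trace = 1 →
        (PC ⊗ₖ (1 : Matrix (Fin dB) (Fin dB) ℂ)) * ρ *
          (PC ⊗ₖ (1 : Matrix (Fin dB) (Fin dB) ℂ)) = ρ →
        trB (∑ c, (R c ⊗ₖ (1 : Matrix (Fin dB) (Fin dB) ℂ)) *
              (∑ a, E a * ρ * (E a)ᴴ) *
              (R c ⊗ₖ (1 : Matrix (Fin dB) (Fin dB) ℂ))ᴴ) = trB ρ := by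
  classical
  by_cases hPC0 : PC = 0
  · refine ⟨Unit, inferInstance, fun _ => 1, by simp, ?_⟩
    intro ρ _ hρtr hρsupp
    exfalso
    rw [hPC0, Matrix.zero_kronecker, Matrix.zero_mul, Matrix.mul_zero] at hρsupp
    rw [← hρsupp, Matrix.trace_zero] at hρtr
    exact zero_ne_one hρtr
  -- Main case : PC ≠ 0
  have hPCsq : PCᴴ * PC = PC := by rw [hPCH.eq, hPCproj]
  have hscancel : ∀ c d : ℂ, c • PC = d • PC → c = d := by
    intro c d h
    by_contra hne
    have h0 : (c - d) • PC = 0 := by rw [sub_smul, h, sub_self]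
    rcases smul_eq_zero.mp h0 with h' | h'
    · exact hne (sub_eq_zero.mp h')
    · exact hPC0 h'
  have hLherm : Matrix.IsHermitian (Matrix.of Λ) := by
    ext p q
    rw [Matrix.conjTranspose_apply]
    exact (hΛH p q).symm
  set EP : ι × Fin dB × Fin dB → Matrix (Fin dS) (Fin dS) ℂ :=
    fun p => pmel (E p.1) p.2.1 p.2.2 with hEPdef
  have hGram : ∀ p q, PC * (EP p)ᴴ * EP q * PC = Λ p q • PC := by
    rintro ⟨a, k, l⟩ ⟨b, m, n⟩
    exact hKL a b k l m n
  -- sum rule from trace preservation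
  have hsum : ∀ m m' : Fin dB,
      (∑ a : ι, ∑ n : Fin dB, Λ (a, n, m') (a, n, m)) = if m' = m then 1 else 0 := by
    intro m m'
    apply hscancel
    calc (∑ a : ι, ∑ n : Fin dB, Λ (a, n, m') (a, n, m)) • PC
        = ∑ a : ι, ∑ n : Fin dB, Λ (a, n, m') (a, n, m) • PC := by
          rw [Finset.sum_smul]
          exact Finset.sum_congr rfl fun a _ => Finset.sum_smul
      _ = ∑ a : ι, ∑ n : Fin dB,
            PC * (pmel (E a) n m')ᴴ * pmel (E a) n m * PC := by
          exact Finset.sum_congr rfl fun a _ => Finset.sum_congr rfl fun n _ =>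
            (hKL a a n m' n m).symm
      _ = PC * pmel (∑ a, (E a)ᴴ * E a) m' m * PC := by
          rw [pmel_sum]
          simp only [pmel_conjTranspose_mul, Finset.mul_sum, Finset.sum_mul, mul_assoc]
      _ = PC * pmel (1 : Matrix (Fin dS × Fin dB) (Fin dS × Fin dB) ℂ) m' m * PC := by
          rw [hTP]
      _ = (if m' = m then 1 else 0 : ℂ) • PC := by
          rw [pmel_one]
          split <;> simp [hPCproj]
  -- the Gram expansion
  have hexp1 : ∀ (x : ι × Fin dB × Fin dB → ℂ) (q),
      PC * (∑ p, x p • EP p)ᴴ * EP q * PC = (∑ p, star (x p) * Λ p q) • PC := by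
    intro x q
    calc PC * (∑ p, x p • EP p)ᴴ * EP q * PC
        = ∑ p, star (x p) • (PC * (EP p)ᴴ * EP q * PC) := by
          rw [Matrix.conjTranspose_sum]
          simp only [Matrix.conjTranspose_smul, Finset.mul_sum, Finset.sum_mul,
            Matrix.mul_smul, Matrix.smul_mul]
      _ = ∑ p, (star (x p) * Λ p q) • PC := by
          refine Finset.sum_congr rfl fun p _ => ?_
          rw [hGram, smul_smul]
      _ = (∑ p, star (x p) * Λ p q) • PC := by rw [Finset.sum_smul]
  -- positive semidefiniteness of Λ
  obtain ⟨rPC, hrPC0, hrPCtr, hrPCz⟩ := trace_conj_real PC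
  have htrPC : PC.trace = (rPC : ℂ) := by rw [← hPCsq]; exact hrPCtr
  have hrpos : 0 < rPC :=
    lt_of_le_of_ne hrPC0 (fun h => hPC0 (hrPCz h.symm))
  have hLpsd : Matrix.PosSemidef (Matrix.of Λ) := by
    refine Matrix.PosSemidef.of_dotProduct_mulVec_nonneg hLherm fun x => ?_
    have hNN : ((∑ q, x q • EP q) * PC)ᴴ * ((∑ q, x q • EP q) * PC)
        = (star x ⬝ᵥ Matrix.of Λ *ᵥ x) • PC := by
      calc ((∑ q, x q • EP q) * PC)ᴴ * ((∑ q, x q • EP q) * PC)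
          = PC * (∑ q, x q • EP q)ᴴ * (∑ q, x q • EP q) * PC := by
            rw [Matrix.conjTranspose_mul, hPCH.eq]
            simp only [mul_assoc]
        _ = ∑ q, x q • (PC * (∑ p, x p • EP p)ᴴ * EP q * PC) := by
            simp only [Finset.mul_sum, Finset.sum_mul, Matrix.mul_smul, Matrix.smul_mul]
        _ = ∑ q, x q • ((∑ p, star (x p) * Λ p q) • PC) := by
            exact Finset.sum_congr rfl fun q _ => by rw [hexp1]
        _ = (∑ q, x q * (∑ p, star (x p) * Λ p q)) • PC := by
            rw [Finset.sum_smul]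
            exact Finset.sum_congr rfl fun q _ => by rw [smul_smul]
        _ = (star x ⬝ᵥ Matrix.of Λ *ᵥ x) • PC := by
            congr 1
            simp only [dotProduct, Matrix.mulVec, Matrix.of_apply,
              Pi.star_apply, Finset.mul_sum]
            rw [Finset.sum_comm]
            refine Finset.sum_congr rfl fun p _ => Finset.sum_congr rfl fun q _ => by
              ring
    obtain ⟨r, hr0, hrtr, _⟩ := trace_conj_real ((∑ q, x q • EP q) * PC)
    have h1 : (star x ⬝ᵥ Matrix.of Λ *ᵥ x) * (rPC : ℂ) = (r : ℂ) := by
      rw [← hrtr, hNN, Matrix.trace_smul, htrPC, smul_eq_mul]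
    have h2 : star x ⬝ᵥ Matrix.of Λ *ᵥ x = (r / rPC : ℝ) := by
      push_cast
      rw [← h1]
      field_simp
    rw [h2]
    rw [Complex.zero_le_real]
    positivity
  -- spectral data
  set u : Matrix (ι × Fin dB × Fin dB) (ι × Fin dB × Fin dB) ℂ :=
    ((Matrix.IsHermitian.eigenvectorUnitary hLherm :
      Matrix.unitaryGroup (ι × Fin dB × Fin dB) ℂ) :
      Matrix (ι × Fin dB × Fin dB) (ι × Fin dB × Fin dB) ℂ) with hudef
  set eig : ι × Fin dB × Fin dB → ℝ := hLherm.eigenvalues with heigdef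
  have hspec : Matrix.of Λ = u * Matrix.diagonal (fun α => (eig α : ℂ)) * star u :=
    hLherm.spectral_theorem
  have hu1 : star u * u = 1 :=
    Matrix.mem_unitaryGroup_iff'.mp (Matrix.IsHermitian.eigenvectorUnitary hLherm).2
  have hu2 : u * star u = 1 :=
    Matrix.mem_unitaryGroup_iff.mp (Matrix.IsHermitian.eigenvectorUnitary hLherm).2
  have hsuL : star u * Matrix.of Λ = Matrix.diagonal (fun α => (eig α : ℂ)) * star u := by
    rw [hspec, ← mul_assoc, ← mul_assoc, hu1, one_mul]
  have hkey1 : ∀ α q, (∑ p, star (u p α) * Λ p q) = (eig α : ℂ) * star (u q α) := by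
    intro α q
    have h := Matrix.ext_iff.mpr hsuL α q
    rw [Matrix.mul_apply, Matrix.diagonal_mul] at h
    simpa only [Matrix.star_apply, Matrix.of_apply] using h
  have hLe : ∀ p q, Λ p q = ∑ α, u p α * (eig α : ℂ) * star (u q α) := by
    intro p q
    have h := Matrix.ext_iff.mpr hspec p q
    rw [Matrix.mul_apply] at h
    rw [show Λ p q = Matrix.of Λ p q from rfl, h]
    refine Finset.sum_congr rfl fun α _ => ?_
    rw [Matrix.mul_diagonal, Matrix.star_apply]
  have heig0 : ∀ α, 0 ≤ eig α := fun α => hLpsd.eigenvalues_nonneg α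
  set sf : ι × Fin dB × Fin dB → ℝ := fun α => Real.sqrt (eig α) with hsfdef
  set cc : ι × Fin dB × Fin dB → ℝ := fun α => (sf α)⁻¹ with hccdef
  have hs2 : ∀ α, sf α * sf α = eig α := fun α => Real.mul_self_sqrt (heig0 α)
  have hceig : ∀ α, cc α * eig α = sf α := by
    intro α
    rcases (heig0 α).eq_or_lt with h | h
    · simp [hccdef, hsfdef, ← h]
    · have hs : 0 < sf α := Real.sqrt_pos.mpr h
      rw [hccdef, ← hs2 α]
      exact inv_mul_cancel_left₀ hs.ne' (sf α)
  have hcc2 : ∀ α, eig α ≠ 0 → cc α ^ 2 * cc α ^ 2 * eig α = cc α ^ 2 := by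
    intro α h
    have hs : 0 < sf α := Real.sqrt_pos.mpr (lt_of_le_of_ne (heig0 α) (Ne.symm h))
    rw [hccdef]
    simp only []
    rw [← hs2 α]
    field_simp
  -- the F operators and their Gram structure
  set F : ι × Fin dB × Fin dB → Matrix (Fin dS) (Fin dS) ℂ :=
    fun α => ∑ p, u p α • EP p with hFdef
  set G : ι × Fin dB × Fin dB → Matrix (Fin dS) (Fin dS) ℂ :=
    fun α => F α * PC with hGdef
  have hGE : ∀ α q, (G α)ᴴ * (EP q * PC) = ((eig α : ℂ) * star (u q α)) • PC := by
    intro α q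
    have h := hexp1 (fun p => u p α) q
    rw [hkey1 α q] at h
    calc (G α)ᴴ * (EP q * PC)
        = PC * (∑ p, u p α • EP p)ᴴ * EP q * PC := by
          rw [hGdef]
          simp only [Matrix.conjTranspose_mul, hPCH.eq, hFdef, mul_assoc]
      _ = ((eig α : ℂ) * star (u q α)) • PC := h
  have hGG : ∀ α β, (G α)ᴴ * G β = (if α = β then (eig α : ℂ) else 0) • PC := by
    intro α β
    calc (G α)ᴴ * G β
        = ∑ q, u q β • ((G α)ᴴ * (EP q * PC)) := by
          rw [hGdef]
          simp only [hFdef, Finset.sum_mul, Finset.mul_sum, Matrix.mul_smul,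
            Matrix.smul_mul]
      _ = ∑ q, ((eig α : ℂ) * (star (u q α) * u q β)) • PC := by
          refine Finset.sum_congr rfl fun q _ => ?_
          rw [hGE, smul_smul]
          ring_nf
      _ = ((eig α : ℂ) * (∑ q, star (u q α) * u q β)) • PC := by
          rw [← Finset.sum_smul, Finset.mul_sum]
      _ = (if α = β then (eig α : ℂ) else 0) • PC := by
          have h : (∑ q, star (u q α) * u q β) = (1 : Matrix _ _ ℂ) α β := by
            rw [← hu1, Matrix.mul_apply]
            exact Finset.sum_congr rfl fun q _ => by rw [Matrix.star_apply]
          rw [h, Matrix.one_apply]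
          split <;> simp
  have hG0 : ∀ α, eig α = 0 → G α = 0 := by
    intro α h0
    have h1 : (G α)ᴴ * G α = 0 := by
      rw [hGG, if_pos rfl, h0]
      simp
    exact Matrix.conjTranspose_mul_self_eq_zero.mp h1
  have hGPC : ∀ α, G α * PC = G α := by
    intro α
    rw [hGdef]
    simp only [mul_assoc, hPCproj]
  -- recovery Kraus operators
  set R : ι × Fin dB × Fin dB → Matrix (Fin dS) (Fin dS) ℂ :=
    fun α => (cc α : ℂ) • (G α)ᴴ with hRdef
  set Q : Matrix (Fin dS) (Fin dS) ℂ :=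
    ∑ α, ((cc α : ℂ) ^ 2) • (G α * (G α)ᴴ) with hQdef
  have hRR : ∀ α, (R α)ᴴ * R α = ((cc α : ℂ) ^ 2) • (G α * (G α)ᴴ) := by
    intro α
    rw [hRdef]
    simp only [Matrix.conjTranspose_smul, Matrix.conjTranspose_conjTranspose,
      Matrix.smul_mul, Matrix.mul_smul, smul_smul]
    congr 1
    rw [Complex.star_def, Complex.conj_ofReal]
    ring
  have hQH : Qᴴ = Q := by
    rw [hQdef, Matrix.conjTranspose_sum]
    refine Finset.sum_congr rfl fun α _ => ?_
    rw [Matrix.conjTranspose_smul, Matrix.conjTranspose_mul,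
      Matrix.conjTranspose_conjTranspose]
    congr 1
    rw [star_pow, Complex.star_def, Complex.conj_ofReal]
  have hQQ : Q * Q = Q := by
    rw [hQdef, Finset.sum_mul]
    refine Finset.sum_congr rfl fun α _ => ?_
    rw [Finset.mul_sum]
    have hterm : ∀ β, ((cc α : ℂ) ^ 2) • (G α * (G α)ᴴ) * (((cc β : ℂ) ^ 2) • (G β * (G β)ᴴ))
        = if α = β then ((cc α : ℂ) ^ 2 * (cc α : ℂ) ^ 2 * (eig α : ℂ))
            • (G α * (G β)ᴴ) else 0 := by
      intro β
      rw [Matrix.smul_mul, Matrix.mul_smul, smul_smul]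
      have hmid : G α * (G α)ᴴ * (G β * (G β)ᴴ)
          = (if α = β then (eig α : ℂ) else 0) • (G α * (G β)ᴴ) := by
        calc G α * (G α)ᴴ * (G β * (G β)ᴴ)
            = G α * ((G α)ᴴ * G β) * (G β)ᴴ := by
              simp only [mul_assoc]
          _ = (if α = β then (eig α : ℂ) else 0) • (G α * PC * (G β)ᴴ) := by
              rw [hGG]
              simp only [Matrix.mul_smul, Matrix.smul_mul]
          _ = (if α = β then (eig α : ℂ) else 0) • (G α * (G β)ᴴ) := by
              rw [hGPC]
      rw [hmid, smul_smul]
      by_cases h : α = β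
      · subst h
        rw [if_pos rfl, if_pos rfl]
      · rw [if_neg h, if_neg h]
        simp
    rw [Finset.sum_congr rfl fun β _ => hterm β, Finset.sum_ite_eq Finset.univ α
      (fun β => ((cc α : ℂ) ^ 2 * (cc α : ℂ) ^ 2 * (eig α : ℂ)) • (G α * (G β)ᴴ))]
    simp only [Finset.mem_univ, if_true]
    by_cases h0 : eig α = 0
    · rw [hG0 α h0]
      simp
    · have := hcc2 α h0
      have hco : ((cc α : ℂ) ^ 2 * (cc α : ℂ) ^ 2 * (eig α : ℂ)) = ((cc α : ℂ) ^ 2) := by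
        calc ((cc α : ℂ) ^ 2 * (cc α : ℂ) ^ 2 * (eig α : ℂ))
            = ((cc α ^ 2 * cc α ^ 2 * eig α : ℝ) : ℂ) := by push_cast; ring
          _ = ((cc α ^ 2 : ℝ) : ℂ) := by rw [this]
          _ = ((cc α : ℂ) ^ 2) := by push_cast; ring
      rw [hco]
  have hQEP : ∀ q, Q * (EP q * PC) = EP q * PC := by
    intro q
    have hstep : ∀ α, ((cc α : ℂ) ^ 2) • (G α * (G α)ᴴ) * (EP q * PC)
        = star (u q α) • G α := by
      intro α
      rw [Matrix.smul_mul, mul_assoc, hGE, Matrix.mul_smul, smul_smul]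
      by_cases h0 : eig α = 0
      · rw [hG0 α h0]
        simp
      · have h1 : (cc α : ℂ) ^ 2 * ((eig α : ℂ) * star (u q α)) = star (u q α) := by
          have h2 : cc α ^ 2 * eig α = 1 := by
            have hs : 0 < sf α := Real.sqrt_pos.mpr
              (lt_of_le_of_ne (heig0 α) (Ne.symm h0))
            rw [hccdef]
            simp only []
            rw [← hs2 α]
            field_simp
          have h3 : ((cc α : ℂ)) ^ 2 * ((eig α : ℂ)) = 1 := by
            calc ((cc α : ℂ)) ^ 2 * ((eig α : ℂ))
                = ((cc α ^ 2 * eig α : ℝ) : ℂ) := by push_cast; ring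
              _ = 1 := by rw [h2]; norm_num
          calc (cc α : ℂ) ^ 2 * ((eig α : ℂ) * star (u q α))
              = ((cc α : ℂ) ^ 2 * (eig α : ℂ)) * star (u q α) := by ring
            _ = star (u q α) := by rw [h3, one_mul]
        rw [h1, hGPC]
    calc Q * (EP q * PC)
        = ∑ α, star (u q α) • G α := by
          rw [hQdef, Finset.sum_mul]
          exact Finset.sum_congr rfl fun α _ => hstep α
      _ = (∑ α, star (u q α) • F α) * PC := by
          rw [Finset.sum_mul]
          exact Finset.sum_congr rfl fun α _ => by rw [hGdef]; exact (Matrix.smul_mul _ _ _).symm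
      _ = EP q * PC := by
          congr 1
          calc ∑ α, star (u q α) • F α
              = ∑ α, ∑ p, (u p α * star (u q α)) • EP p := by
                refine Finset.sum_congr rfl fun α _ => ?_
                rw [hFdef]
                simp only [Finset.smul_sum, smul_smul]
                exact Finset.sum_congr rfl fun p _ => by rw [mul_comm]
            _ = ∑ p, (∑ α, u p α * star (u q α)) • EP p := by
                rw [Finset.sum_comm]
                exact Finset.sum_congr rfl fun p _ => by rw [Finset.sum_smul]
            _ = ∑ p, ((1 : Matrix _ _ ℂ) p q) • EP p := by
                refine Finset.sum_congr rfl fun p _ => ?_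
                congr 1
                rw [← hu2, Matrix.mul_apply]
                exact Finset.sum_congr rfl fun α _ => by rw [Matrix.star_apply]
            _ = EP q := by
                rw [Finset.sum_congr rfl fun p _ => by rw [Matrix.one_apply]]
                simp
  -- trace preservation of the recovery channel
  set n₀ : ℕ := Fintype.card (ι × Fin dB × Fin dB) with hn₀
  set e : Fin n₀ ≃ (ι × Fin dB × Fin dB) := (Fintype.equivFin _).symm with hedef
  refine ⟨Fin n₀ ⊕ Unit, inferInstance,
    Sum.elim (fun i => R (e i)) (fun _ : Unit => 1 - Q), ?_, ?_⟩
  · rw [Fintype.sum_sum_type]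
    have h1 : ∑ i : Fin n₀, (Sum.elim (fun i => R (e i)) (fun _ : Unit => 1 - Q) (Sum.inl i))ᴴ
          * Sum.elim (fun i => R (e i)) (fun _ : Unit => 1 - Q) (Sum.inl i) = Q := by
      simp only [Sum.elim_inl]
      rw [Equiv.sum_comp e (fun α => (R α)ᴴ * R α), hQdef]
      exact Finset.sum_congr rfl fun α _ => hRR α
    have h2 : (1 - Q)ᴴ * (1 - Q) = 1 - Q := by
      rw [Matrix.conjTranspose_sub, Matrix.conjTranspose_one, hQH, sub_mul, one_mul,
        mul_sub, mul_one, hQQ]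
      abel
    rw [h1]
    simp only [Sum.elim_inr, h2]
    simp
  · intro ρ hρpsd hρtr hρsupp
    set w : ι → (ι × Fin dB × Fin dB) → Matrix (Fin dB) (Fin dB) ℂ :=
      fun a α => Matrix.of fun k l => (sf α : ℂ) * star (u (a, k, l) α) with hwdef
    -- identity (A): the corrected Kraus operators
    have hREP : ∀ α (q : ι × Fin dB × Fin dB),
        R α * (EP q * PC) = ((sf α : ℂ) * star (u q α)) • PC := by
      intro α q
      rw [hRdef]
      simp only [Matrix.smul_mul]
      rw [hGE, smul_smul]
      congr 1
      have : ((cc α : ℂ)) * ((eig α : ℂ)) = (sf α : ℂ) := by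
        calc ((cc α : ℂ)) * ((eig α : ℂ))
            = ((cc α * eig α : ℝ) : ℂ) := by push_cast; ring
          _ = (sf α : ℂ) := by rw [hceig α]
      calc (cc α : ℂ) * ((eig α : ℂ) * star (u q α))
          = ((cc α : ℂ) * (eig α : ℂ)) * star (u q α) := by ring
        _ = (sf α : ℂ) * star (u q α) := by rw [this]
    have hGkron : ∀ (a : ι) α,
        (R α ⊗ₖ (1 : Matrix (Fin dB) (Fin dB) ℂ)) * E a
            * (PC ⊗ₖ (1 : Matrix (Fin dB) (Fin dB) ℂ))
          = PC ⊗ₖ w a α := by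
      intro a α
      apply pmel_ext
      intro k l
      rw [pmel_mul_kron_one, pmel_kron_one_mul, pmel_kron, mul_assoc]
      have : pmel (E a) k l = EP (a, k, l) := rfl
      rw [this, hREP α (a, k, l)]
      rfl
    have hQE0 : ∀ a : ι,
        ((1 - Q) ⊗ₖ (1 : Matrix (Fin dB) (Fin dB) ℂ)) * E a
            * (PC ⊗ₖ (1 : Matrix (Fin dB) (Fin dB) ℂ)) = 0 := by
      intro a
      apply pmel_ext
      intro k l
      rw [pmel_mul_kron_one, pmel_kron_one_mul, pmel_zero]
      have : pmel (E a) k l = EP (a, k, l) := rfl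
      rw [this, Matrix.sub_mul, Matrix.one_mul, Matrix.sub_mul, mul_assoc,
        hQEP (a, k, l)]
      simp
    -- the bath-side identity
    have hwid : (∑ α, ∑ a : ι, (w a α)ᴴ * w a α)
        = (1 : Matrix (Fin dB) (Fin dB) ℂ) := by
      ext k l
      rw [Matrix.sum_apply]
      calc ∑ α, (∑ a : ι, (w a α)ᴴ * w a α) k l
          = ∑ α, ∑ a : ι, ∑ nn : Fin dB,
              u (a, nn, k) α * (eig α : ℂ) * star (u (a, nn, l) α) := by
            refine Finset.sum_congr rfl fun α _ => ?_
            rw [Matrix.sum_apply]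
            refine Finset.sum_congr rfl fun a _ => ?_
            rw [Matrix.mul_apply]
            refine Finset.sum_congr rfl fun nn _ => ?_
            rw [Matrix.conjTranspose_apply]
            show star ((sf α : ℂ) * star (u (a, nn, k) α))
                * ((sf α : ℂ) * star (u (a, nn, l) α)) = _
            have h1 : star ((sf α : ℂ) * star (u (a, nn, k) α))
                = (sf α : ℂ) * u (a, nn, k) α := by
              rw [star_mul', star_star, Complex.star_def, Complex.conj_ofReal]
            have h2 : ((sf α : ℂ)) * ((sf α : ℂ)) = (eig α : ℂ) := by
              calc ((sf α : ℂ)) * ((sf α : ℂ))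
                  = ((sf α * sf α : ℝ) : ℂ) := by push_cast; ring
                _ = (eig α : ℂ) := by rw [hs2 α]
            rw [h1]
            calc (sf α : ℂ) * u (a, nn, k) α * ((sf α : ℂ) * star (u (a, nn, l) α))
                = ((sf α : ℂ) * (sf α : ℂ)) * u (a, nn, k) α * star (u (a, nn, l) α) := by
                  ring
              _ = u (a, nn, k) α * (eig α : ℂ) * star (u (a, nn, l) α) := by
                  rw [h2]; ring
        _ = ∑ a : ι, ∑ nn : Fin dB, ∑ α,
              u (a, nn, k) α * (eig α : ℂ) * star (u (a, nn, l) α) := by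
            rw [Finset.sum_comm]
            exact Finset.sum_congr rfl fun a _ => Finset.sum_comm
        _ = ∑ a : ι, ∑ nn : Fin dB, Λ (a, nn, k) (a, nn, l) := by
            exact Finset.sum_congr rfl fun a _ => Finset.sum_congr rfl fun nn _ =>
              (hLe (a, nn, k) (a, nn, l)).symm
        _ = (1 : Matrix (Fin dB) (Fin dB) ℂ) k l := by
            rw [hsum l k, Matrix.one_apply]
    -- the main rearrangement
    have hmain : (∑ c : Fin n₀ ⊕ Unit,
          ((Sum.elim (fun i => R (e i)) (fun _ : Unit => 1 - Q) c)
              ⊗ₖ (1 : Matrix (Fin dB) (Fin dB) ℂ))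
            * (∑ a, E a * ρ * (E a)ᴴ)
            * ((Sum.elim (fun i => R (e i)) (fun _ : Unit => 1 - Q) c)
              ⊗ₖ (1 : Matrix (Fin dB) (Fin dB) ℂ))ᴴ)
        = ∑ α, ∑ a : ι, (PC ⊗ₖ w a α) * ρ * (PC ⊗ₖ w a α)ᴴ := by
      rw [Fintype.sum_sum_type]
      have hterm : ∀ (X : Matrix (Fin dS) (Fin dS) ℂ) (a : ι),
          (X ⊗ₖ (1 : Matrix (Fin dB) (Fin dB) ℂ)) * (E a * ρ * (E a)ᴴ)
              * (X ⊗ₖ (1 : Matrix (Fin dB) (Fin dB) ℂ))ᴴ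
            = ((X ⊗ₖ (1 : Matrix (Fin dB) (Fin dB) ℂ)) * E a
                * (PC ⊗ₖ (1 : Matrix (Fin dB) (Fin dB) ℂ))) * ρ
              * (((X ⊗ₖ (1 : Matrix (Fin dB) (Fin dB) ℂ)) * E a
                * (PC ⊗ₖ (1 : Matrix (Fin dB) (Fin dB) ℂ)))ᴴ) := by
        intro X a
        conv_lhs => rw [← hρsupp]
        have hPCk : (PC ⊗ₖ (1 : Matrix (Fin dB) (Fin dB) ℂ))ᴴ
            = PC ⊗ₖ (1 : Matrix (Fin dB) (Fin dB) ℂ) := by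
          rw [kron_conjTranspose, hPCH.eq, Matrix.conjTranspose_one]
        rw [Matrix.conjTranspose_mul, Matrix.conjTranspose_mul, hPCk]
        simp only [mul_assoc]
      have hinr : ∀ (_ : Unit),
          ((1 - Q) ⊗ₖ (1 : Matrix (Fin dB) (Fin dB) ℂ))
              * (∑ a, E a * ρ * (E a)ᴴ)
              * ((1 - Q) ⊗ₖ (1 : Matrix (Fin dB) (Fin dB) ℂ))ᴴ = 0 := by
        intro _
        rw [Finset.mul_sum, Finset.sum_mul]
        refine Finset.sum_eq_zero fun a _ => ?_
        rw [hterm (1 - Q) a, hQE0 a]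
        simp
      have hinl : ∀ i : Fin n₀,
          (R (e i) ⊗ₖ (1 : Matrix (Fin dB) (Fin dB) ℂ))
              * (∑ a, E a * ρ * (E a)ᴴ)
              * (R (e i) ⊗ₖ (1 : Matrix (Fin dB) (Fin dB) ℂ))ᴴ
            = ∑ a : ι, (PC ⊗ₖ w a (e i)) * ρ * (PC ⊗ₖ w a (e i))ᴴ := by
        intro i
        rw [Finset.mul_sum, Finset.sum_mul]
        refine Finset.sum_congr rfl fun a _ => ?_
        rw [hterm (R (e i)) a, hGkron a (e i)]
      simp only [Sum.elim_inl, Sum.elim_inr]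
      rw [Finset.sum_congr rfl fun i _ => hinl i,
        Finset.sum_congr rfl fun x _ => hinr x]
      simp only [Finset.sum_const, Finset.card_univ, Fintype.card_unit, one_smul,
        add_zero]
      exact Equiv.sum_comp e (fun α => ∑ a : ι, (PC ⊗ₖ w a α) * ρ * (PC ⊗ₖ w a α)ᴴ)
    rw [hmain]
    -- compute the partial trace
    have hfinal : trB (∑ α, ∑ a : ι, (PC ⊗ₖ w a α) * ρ * (PC ⊗ₖ w a α)ᴴ)
        = PC * bop (∑ α, ∑ a : ι, (w a α)ᴴ * w a α) ρ * PC := by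
      rw [trB_sum]
      rw [Finset.sum_congr rfl fun α _ => trB_sum Finset.univ
        (fun a => (PC ⊗ₖ w a α) * ρ * (PC ⊗ₖ w a α)ᴴ)]
      rw [Finset.sum_congr rfl fun α _ => Finset.sum_congr rfl fun a _ =>
        trB_kron_conj PC (w a α) ρ]
      rw [bop_sum, Finset.mul_sum, Finset.sum_mul]
      refine Finset.sum_congr rfl fun α _ => ?_
      rw [bop_sum, Finset.mul_sum, Finset.sum_mul]
      exact Finset.sum_congr rfl fun a _ => by rw [hPCH.eq]
    rw [hfinal, hwid, bop_one]
    -- `trB ρ` is supported on the code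
    have hsupptr : PC * trB ρ * PC = trB ρ := by
      conv_rhs => rw [← hρsupp]
      have hPCk : (PC ⊗ₖ (1 : Matrix (Fin dB) (Fin dB) ℂ))
          = (PC ⊗ₖ (1 : Matrix (Fin dB) (Fin dB) ℂ))ᴴᴴ := by
        rw [Matrix.conjTranspose_conjTranspose]
      calc PC * trB ρ * PC
          = PC * bop ((1 : Matrix (Fin dB) (Fin dB) ℂ)ᴴ
              * (1 : Matrix (Fin dB) (Fin dB) ℂ)) ρ * PCᴴ := by
            rw [Matrix.conjTranspose_one, Matrix.one_mul, bop_one, hPCH.eq]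
        _ = trB ((PC ⊗ₖ (1 : Matrix (Fin dB) (Fin dB) ℂ)) * ρ
              * (PC ⊗ₖ (1 : Matrix (Fin dB) (Fin dB) ℂ))ᴴ) := by
            rw [trB_kron_conj]
        _ = trB ((PC ⊗ₖ (1 : Matrix (Fin dB) (Fin dB) ℂ)) * ρ
              * (PC ⊗ₖ (1 : Matrix (Fin dB) (Fin dB) ℂ))) := by
            rw [kron_conjTranspose, hPCH.eq, Matrix.conjTranspose_one]
    exact hsupptr


end OSQEC5
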